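/- In three variables, the identity (3 M_4 - M_2^2)(M_2^3 - 5 M_2 M_4 + 6 M_6) = 4(x^2 (x^2 - y^2)^2 (x^2 - z^2)^2 + y^2 (y^2 - x^2)^2 (y^2 - z^2)^2 + z^2 (z^2 - x^2)^2 (z^2 - y^2)^2) holds; in particular, the left-hand side is a sum of squares of forms when n = 3. -/

import Mathlib

open MvPolynomial Finset

noncomputable def M3 (r : ℕ) : MvPolynomial (Fin 3) ℝ := X 0 ^ r + X 1 ^ r + X 2 ^ r

def IsSosForms {n : ℕ} (f : MvPolynomial (Fin n) ℝ) : Prop :=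
  ∃ (k : ℕ) (h : Fin k → MvPolynomial (Fin n) ℝ),
    (∀ i, ∃ d, (h i).IsHomogeneous d) ∧ f = ∑ i, h i ^ 2

noncomputable def g (i : Fin 3) : MvPolynomial (Fin 3) ℝ :=
  ![2 * X 0 * (X 0 ^ 2 - X 1 ^ 2) * (X 0 ^ 2 - X 2 ^ 2),
    2 * X 1 * (X 1 ^ 2 - X 0 ^ 2) * (X 1 ^ 2 - X 2 ^ 2),
    2 * X 2 * (X 2 ^ 2 - X 0 ^ 2) * (X 2 ^ 2 - X 1 ^ 2)] i

lemma g_hom (i : Fin 3) : (g i).IsHomogeneous 5 := by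
  have hX : ∀ j : Fin 3, (X j : MvPolynomial (Fin 3) ℝ).IsHomogeneous 1 :=
    fun j => isHomogeneous_X ℝ j
  have h2 : ((2 : MvPolynomial (Fin 3) ℝ)).IsHomogeneous 0 := by
    simpa [map_ofNat] using isHomogeneous_C (Fin 3) (2 : ℝ)
  have hsq : ∀ j k : Fin 3,
      ((X j ^ 2 - X k ^ 2 : MvPolynomial (Fin 3) ℝ)).IsHomogeneous 2 :=
    fun j k => ((hX j).pow 2).sub ((hX k).pow 2)
  fin_cases i <;>
    simpa [g] using
      (((h2.mul (hX _)).mul (hsq _ _)).mul (hsq _ _) : IsHomogeneous _ 5)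

theorem P3_identity_and_sos :
    ((3 * M3 4 - (M3 2) ^ 2) * ((M3 2) ^ 3 - 5 * M3 2 * M3 4 + 6 * M3 6) =
        4 * (X 0 ^ 2 * (X 0 ^ 2 - X 1 ^ 2) ^ 2 * (X 0 ^ 2 - X 2 ^ 2) ^ 2
          + X 1 ^ 2 * (X 1 ^ 2 - X 0 ^ 2) ^ 2 * (X 1 ^ 2 - X 2 ^ 2) ^ 2
          + X 2 ^ 2 * (X 2 ^ 2 - X 0 ^ 2) ^ 2 * (X 2 ^ 2 - X 1 ^ 2) ^ 2)) ∧
      IsSosForms ((3 * M3 4 - (M3 2) ^ 2) * ((M3 2) ^ 3 - 5 * M3 2 * M3 4 + 6 * M3 6)) := by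
  constructor
  · simp only [M3]; ring
  · refine ⟨3, g, fun i => ⟨5, g_hom i⟩, ?_⟩
    simp only [M3, Fin.sum_univ_three, g]
    simp only [Matrix.cons_val_zero, Matrix.cons_val_one, Matrix.head_cons,
      Matrix.cons_val_two, Matrix.tail_cons]
    ring
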